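/- Consider the ODE N'(t) = -k₁·A(t)·N(t) + (k₂·B(t) + k₃·C(t))·(1 - N(t)), where A, B, C : ℝ≥0 → ℝ≥0 are continuous with A(t) ≥ δ > 0 for all t, lim_{t→∞} B(t) = lim_{t→∞} C(t) = 0, and N(0) ∈ [0,1]. Then lim_{t→∞} N(t) = 0. -/

import Mathlib

open MeasureTheory intervalIntegral Real Filter

theorem stmt_12 (N A B C : ℝ → ℝ) (k₁ k₂ k₃ δ : ℝ)
    (hk₁ : 0 < k₁) (hk₂ : 0 < k₂) (hk₃ : 0 < k₃) (hδ : 0 < δ)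
    (hAc : Continuous A) (hBc : Continuous B) (hCc : Continuous C)
    (hAnn : ∀ t : ℝ, 0 ≤ t → δ ≤ A t)
    (hBnn : ∀ t : ℝ, 0 ≤ t → 0 ≤ B t) (hCnn : ∀ t : ℝ, 0 ≤ t → 0 ≤ C t)
    (hB : Filter.Tendsto B Filter.atTop (nhds 0))
    (hC : Filter.Tendsto C Filter.atTop (nhds 0))
    (hN0 : N 0 ∈ Set.Icc (0:ℝ) 1)
    (hN : ∀ t : ℝ, 0 ≤ t →
      HasDerivAt N (-k₁ * A t * N t + (k₂ * B t + k₃ * C t) * (1 - N t)) t) :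
    Filter.Tendsto N Filter.atTop (nhds 0) := by
  obtain ⟨hN0l, hN0r⟩ := hN0
  set c := k₁ * δ with hc
  have hcpos : 0 < c := mul_pos hk₁ hδ
  set f : ℝ → ℝ := fun t => k₂ * B t + k₃ * C t with hf
  set g : ℝ → ℝ := fun t => k₁ * A t + f t with hg
  have hfc : Continuous f := (continuous_const.mul hBc).add (continuous_const.mul hCc)
  have hgc : Continuous g := (continuous_const.mul hAc).add hfc
  have hfnn : ∀ t, 0 ≤ t → 0 ≤ f t := fun t ht =>
    add_nonneg (mul_nonneg hk₂.le (hBnn t ht)) (mul_nonneg hk₃.le (hCnn t ht))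
  have hgec : ∀ t, 0 ≤ t → c ≤ g t := fun t ht =>
    le_add_of_le_of_nonneg (mul_le_mul_of_nonneg_left (hAnn t ht) hk₁.le) (hfnn t ht)
  set G : ℝ → ℝ := fun t => ∫ s in (0:ℝ)..t, g s with hG
  have hGd : ∀ t, HasDerivAt G (g t) t := fun t =>
    intervalIntegral.integral_hasDerivAt_right (hgc.intervalIntegrable _ _)
      (hgc.stronglyMeasurableAtFilter _ _) hgc.continuousAt
  have hGcont : Continuous G := continuous_iff_continuousAt.2 fun t => (hGd t).continuousAt
  have hEc : Continuous fun u => f u * Real.exp (G u) :=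
    hfc.mul (Real.continuous_exp.comp hGcont)
  have hgEc : Continuous fun u => g u * Real.exp (G u) :=
    hgc.mul (Real.continuous_exp.comp hGcont)
  have hMd : ∀ t, 0 ≤ t →
      HasDerivAt (fun u => N u * Real.exp (G u)) (f t * Real.exp (G t)) t := by
    intro t ht
    have h1 : HasDerivAt (fun u => N u * Real.exp (G u)) _ t := (hN t ht).mul ((hGd t).exp)
    convert h1 using 1
    simp only [hf, hg]
    ring
  have hEd : ∀ t, HasDerivAt (fun u => Real.exp (G u)) (g t * Real.exp (G t)) t := by
    intro t
    have := (hGd t).exp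
    convert this using 1
    ring
  -- FTC identities
  have hkey : ∀ a t : ℝ, 0 ≤ a → a ≤ t →
      N t * Real.exp (G t) = N a * Real.exp (G a) + ∫ s in a..t, f s * Real.exp (G s) := by
    intro a t ha hat
    have := intervalIntegral.integral_eq_sub_of_hasDerivAt
      (f := fun u => N u * Real.exp (G u)) (f' := fun u => f u * Real.exp (G u))
      (fun u hu => hMd u (le_trans ha (by rw [Set.uIcc_of_le hat] at hu; exact hu.1)))
      (hEc.intervalIntegrable a t)
    linarith
  have hexp : ∀ a t : ℝ,
      (∫ s in a..t, g s * Real.exp (G s)) = Real.exp (G t) - Real.exp (G a) := by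
    intro a t
    exact intervalIntegral.integral_eq_sub_of_hasDerivAt (fun u _ => hEd u)
      (hgEc.intervalIntegrable a t)
  have hGdiff : ∀ a t : ℝ, 0 ≤ a → a ≤ t → c * (t - a) ≤ G t - G a := by
    intro a t ha hat
    have h1 : G t - G a = ∫ s in a..t, g s :=
      (intervalIntegral.integral_eq_sub_of_hasDerivAt (fun u _ => hGd u)
        (hgc.intervalIntegrable a t)).symm
    have h2 : (∫ s in a..t, (c : ℝ)) ≤ ∫ s in a..t, g s := by
      apply intervalIntegral.integral_mono_on hat
        (intervalIntegrable_const) (hgc.intervalIntegrable a t)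
      intro s hs
      exact hgec s (le_trans ha hs.1)
    rw [intervalIntegral.integral_const, smul_eq_mul] at h2
    linarith
  -- nonnegativity and upper bound of N
  have hNnn : ∀ t, 0 ≤ t → 0 ≤ N t := by
    intro t ht
    have hk := hkey 0 t le_rfl ht
    have hint : 0 ≤ ∫ s in (0:ℝ)..t, f s * Real.exp (G s) := by
      apply intervalIntegral.integral_nonneg ht
      intro s hs
      exact mul_nonneg (hfnn s hs.1) (Real.exp_pos _).le
    nlinarith [Real.exp_pos (G t), Real.exp_pos (G 0), mul_nonneg hN0l (Real.exp_pos (G 0)).le]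
  have hNle : ∀ t, 0 ≤ t → N t ≤ 1 := by
    intro t ht
    have hk := hkey 0 t le_rfl ht
    have hmono : (∫ s in (0:ℝ)..t, f s * Real.exp (G s)) ≤
        ∫ s in (0:ℝ)..t, g s * Real.exp (G s) := by
      apply intervalIntegral.integral_mono_on ht (hEc.intervalIntegrable _ _)
        (hgEc.intervalIntegrable _ _)
      intro s hs
      have : f s ≤ g s := by
        simp only [hg]
        nlinarith [hAnn s hs.1]
      exact mul_le_mul_of_nonneg_right this (Real.exp_pos _).le
    rw [hexp 0 t] at hmono
    have h1 : N t * Real.exp (G t) ≤ Real.exp (G t) := by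
      nlinarith [Real.exp_pos (G 0), mul_le_mul_of_nonneg_right hN0r (Real.exp_pos (G 0)).le]
    nlinarith [Real.exp_pos (G t)]
  -- the limit
  have hftendsto : Tendsto f atTop (nhds 0) := by
    have := (hB.const_mul k₂).add (hC.const_mul k₃)
    simpa using this
  rw [Metric.tendsto_nhds]
  intro ε hε
  have hε2 : 0 < c * ε / 2 := by positivity
  obtain ⟨T₀, hT₀⟩ := (Metric.tendsto_nhds.1 hftendsto (c * ε / 2) hε2).exists_forall_of_atTop
  set T := max T₀ 0 with hT
  have hTnn : 0 ≤ T := le_max_right _ _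
  have hfb : ∀ s, T ≤ s → f s ≤ c * ε / 2 := by
    intro s hs
    have := hT₀ s (le_trans (le_max_left _ _) hs)
    rw [Real.dist_eq, sub_zero] at this
    exact le_of_lt (lt_of_abs_lt this)
  have hbound : ∀ t, T ≤ t → N t ≤ Real.exp (-(c * (t - T))) + ε / 2 := by
    intro t ht
    have htnn : 0 ≤ t := le_trans hTnn ht
    have hk := hkey T t hTnn ht
    have hmono : (∫ s in T..t, f s * Real.exp (G s)) ≤
        ∫ s in T..t, (ε / 2) * (g s * Real.exp (G s)) := by
      apply intervalIntegral.integral_mono_on ht (hEc.intervalIntegrable _ _)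
        ((continuous_const.mul hgEc).intervalIntegrable _ _)
      intro s hs
      have h1 : f s ≤ (ε / 2) * g s := by
        have h1a := hfb s hs.1
        have h1b := hgec s (le_trans hTnn hs.1)
        nlinarith [mul_le_mul_of_nonneg_left h1b (by positivity : (0:ℝ) ≤ ε / 2)]
      show f s * Real.exp (G s) ≤ (ε / 2) * (g s * Real.exp (G s))
      nlinarith [Real.exp_pos (G s)]
    have hint : (∫ s in T..t, (ε / 2) * (g s * Real.exp (G s)))
        = (ε / 2) * (Real.exp (G t) - Real.exp (G T)) := by
      rw [intervalIntegral.integral_const_mul, hexp]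
    rw [hint] at hmono
    have hNT : N T * Real.exp (G T) ≤ Real.exp (G T) := by
      nlinarith [Real.exp_pos (G T), hNle T hTnn]
    have h2 : N t * Real.exp (G t) ≤ Real.exp (G T) + (ε / 2) * Real.exp (G t) := by
      nlinarith [Real.exp_pos (G T)]
    have h3 : N t ≤ Real.exp (G T - G t) + ε / 2 := by
      have hexpt := Real.exp_pos (G t)
      have hkey2 : Real.exp (G T - G t) * Real.exp (G t) = Real.exp (G T) := by
        rw [← Real.exp_add]; ring_nf
      refine le_of_mul_le_mul_right ?_ hexpt
      nlinarith
    have h4 : Real.exp (G T - G t) ≤ Real.exp (-(c * (t - T))) := by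
      apply Real.exp_le_exp.2
      have := hGdiff T t hTnn ht
      linarith
    linarith
  have hexptend : Tendsto (fun t => Real.exp (-(c * (t - T)))) atTop (nhds 0) := by
    apply Real.tendsto_exp_atBot.comp
    have h1 : Tendsto (fun t : ℝ => c * (t - T)) atTop atTop := by
      apply Tendsto.const_mul_atTop hcpos
      exact tendsto_atTop_add_const_right _ (-T) tendsto_id
    exact tendsto_neg_atTop_atBot.comp h1
  have hev1 : ∀ᶠ t in atTop, Real.exp (-(c * (t - T))) < ε / 2 := by
    have := Metric.tendsto_nhds.1 hexptend (ε / 2) (by positivity)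
    filter_upwards [this] with t ht
    rw [Real.dist_eq, sub_zero, abs_of_pos (Real.exp_pos _)] at ht
    exact ht
  filter_upwards [hev1, eventually_ge_atTop T] with t h1 h2
  rw [Real.dist_eq, sub_zero, abs_of_nonneg (hNnn t (le_trans hTnn h2))]
  have := hbound t h2
  linarith
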